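/- Under the setting of fixed-step gradient descent with L-Lipschitz gradient, the congruency satisfies ν_k ≥ ((1 - Lη/2)∑_{i=0}^{k-1}‖∇f(x_i)‖² - (Lη/2)‖∑_{i=0}^{k-1}∇f(x_i)‖²) / (‖∇f(x_k)‖ · ‖∑_{i=0}^{k-1}∇f(x_i)‖). -/

import Mathlib

open scoped RealInnerProductSpace

lemma descent_lemma {n : ℕ} (f : EuclideanSpace ℝ (Fin n) → ℝ) (L : ℝ)
    (hf : Differentiable ℝ f) (hL : 0 ≤ L)
    (hlip : ∀ a b, ‖gradient f b - gradient f a‖ ≤ L * ‖b - a‖)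
    (a b : EuclideanSpace ℝ (Fin n)) :
    f b ≤ f a + ⟪gradient f a, b - a⟫ + L / 2 * ‖b - a‖ ^ 2 := by
  set v := b - a with hv
  have key : ∀ t : ℝ, HasDerivAt (fun t : ℝ => f (a + t • v))
      ⟪gradient f (a + t • v), v⟫ t := by
    intro t
    have h1 : HasDerivAt (fun t : ℝ => a + t • v) v t := by
      simpa using ((hasDerivAt_id t).smul_const v).const_add a
    have h2 := (hf (a + t • v)).hasGradientAt.hasFDerivAt
    simpa [InnerProductSpace.toDual_apply_apply, Function.comp_def] using h2.comp_hasDerivAt t h1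
  set φ : ℝ → ℝ := fun t => f (a + t • v) - t * ⟪gradient f a, v⟫ - L / 2 * ‖v‖ ^ 2 * t ^ 2
    with hφ
  have hφd : ∀ t : ℝ, HasDerivAt φ
      (⟪gradient f (a + t • v), v⟫ - ⟪gradient f a, v⟫ - L / 2 * ‖v‖ ^ 2 * (2 * t)) t := by
    intro t
    have h3 : HasDerivAt (fun t : ℝ => t * ⟪gradient f a, v⟫) ⟪gradient f a, v⟫ t := by
      simpa using (hasDerivAt_id t).mul_const ⟪gradient f a, v⟫
    have h4 : HasDerivAt (fun t : ℝ => L / 2 * ‖v‖ ^ 2 * t ^ 2)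
        (L / 2 * ‖v‖ ^ 2 * (2 * t)) t := by
      simpa [mul_comm, mul_assoc] using (hasDerivAt_pow 2 t).const_mul (L / 2 * ‖v‖ ^ 2)
    exact ((key t).sub h3).sub h4
  have hmono : AntitoneOn φ (Set.Icc 0 1) := by
    apply antitoneOn_of_deriv_nonpos (convex_Icc 0 1)
    · exact (Differentiable.continuous fun t => (hφd t).differentiableAt).continuousOn
    · exact fun t _ => (hφd t).differentiableAt.differentiableWithinAt
    · intro t ht
      rw [interior_Icc] at ht
      rw [(hφd t).deriv]
      have h5 : ⟪gradient f (a + t • v) - gradient f a, v⟫ ≤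
          ‖gradient f (a + t • v) - gradient f a‖ * ‖v‖ := real_inner_le_norm _ _
      have h6 : ‖gradient f (a + t • v) - gradient f a‖ ≤ L * ‖t • v‖ := by
        simpa using hlip a (a + t • v)
      have h7 : ‖t • v‖ = t * ‖v‖ := by
        rw [norm_smul, Real.norm_eq_abs, abs_of_pos ht.1]
      rw [inner_sub_left] at h5
      rw [h7] at h6
      have hvnn : (0:ℝ) ≤ ‖v‖ := norm_nonneg _
      nlinarith [mul_le_mul_of_nonneg_right h6 hvnn]
  have h10 := hmono (Set.left_mem_Icc.2 zero_le_one) (Set.right_mem_Icc.2 zero_le_one)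
    zero_le_one
  have e1 : a + (1:ℝ) • v = b := by rw [one_smul, hv]; abel
  have e0 : a + (0:ℝ) • v = a := by rw [zero_smul, add_zero]
  simp only [hφ, e1, e0, one_mul, one_pow, mul_one, zero_mul, zero_pow, mul_zero,
    sub_zero] at h10
  linarith

lemma sum_descent {n : ℕ} (f : EuclideanSpace ℝ (Fin n) → ℝ) (L η : ℝ)
    (x : ℕ → EuclideanSpace ℝ (Fin n))
    (hf : Differentiable ℝ f) (hL : 0 ≤ L)
    (hlip : ∀ a b, ‖gradient f b - gradient f a‖ ≤ L * ‖b - a‖)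
    (hstep : ∀ i, x (i + 1) = x i - η • gradient f (x i)) (k : ℕ) :
    f (x k) + η * (1 - L * η / 2) * ∑ i ∈ Finset.range k, ‖gradient f (x i)‖ ^ 2 ≤ f (x 0) := by
  induction k with
  | zero => simp
  | succ m ih =>
    have hd := descent_lemma f L hf hL hlip (x m) (x (m + 1))
    have hx : x (m + 1) - x m = -(η • gradient f (x m)) := by rw [hstep m]; abel
    rw [hx, inner_neg_right, real_inner_smul_right, real_inner_self_eq_norm_sq,
      norm_neg, norm_smul, Real.norm_eq_abs, mul_pow, sq_abs] at hd
    rw [Finset.sum_range_succ]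
    nlinarith [norm_nonneg (gradient f (x m)), sq_nonneg ‖gradient f (x m)‖]

lemma x_eq {n : ℕ} (f : EuclideanSpace ℝ (Fin n) → ℝ) (η : ℝ)
    (x : ℕ → EuclideanSpace ℝ (Fin n))
    (hstep : ∀ i, x (i + 1) = x i - η • gradient f (x i)) (k : ℕ) :
    x k = x 0 - η • ∑ i ∈ Finset.range k, gradient f (x i) := by
  induction k with
  | zero => simp
  | succ m ih =>
    rw [hstep m, Finset.sum_range_succ, smul_add, ih]
    abel

theorem congruency_refined_lower_bound (n k : ℕ) (f : EuclideanSpace ℝ (Fin n) → ℝ) (L η : ℝ)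
    (x : ℕ → EuclideanSpace ℝ (Fin n))
    (hf : Differentiable ℝ f) (hL : 0 ≤ L)
    (hlip : ∀ a b, ‖gradient f b - gradient f a‖ ≤ L * ‖b - a‖)
    (hη : 0 < η)
    (hstep : ∀ i, x (i + 1) = x i - η • gradient f (x i))
    (hgk : gradient f (x k) ≠ 0)
    (hsum : ∑ i ∈ Finset.range k, gradient f (x i) ≠ 0) :
    ⟪gradient f (x k), ∑ i ∈ Finset.range k, gradient f (x i)⟫ /
        (‖gradient f (x k)‖ * ‖∑ i ∈ Finset.range k, gradient f (x i)‖) ≥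
      ((1 - L * η / 2) * ∑ i ∈ Finset.range k, ‖gradient f (x i)‖ ^ 2 -
          L * η / 2 * ‖∑ i ∈ Finset.range k, gradient f (x i)‖ ^ 2) /
        (‖gradient f (x k)‖ * ‖∑ i ∈ Finset.range k, gradient f (x i)‖) := by
  set S := ∑ i ∈ Finset.range k, gradient f (x i) with hS
  have hxk := x_eq f η x hstep k
  have hd := descent_lemma f L hf hL hlip (x k) (x 0)
  have hx0 : x 0 - x k = η • S := by rw [hxk]; abel
  rw [hx0, real_inner_smul_right, norm_smul, Real.norm_eq_abs, mul_pow, sq_abs] at hd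
  have hsd := sum_descent f L η x hf hL hlip hstep k
  have hnum : (1 - L * η / 2) * ∑ i ∈ Finset.range k, ‖gradient f (x i)‖ ^ 2 -
      L * η / 2 * ‖S‖ ^ 2 ≤ ⟪gradient f (x k), S⟫ := by
    nlinarith
  have hD : 0 < ‖gradient f (x k)‖ * ‖S‖ :=
    mul_pos (norm_pos_iff.2 hgk) (norm_pos_iff.2 hsum)
  rw [ge_iff_le]
  gcongr
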